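/- Let G be a finite simple graph, let k ∈ ℕ, and let V(G) = A ⊎ B be a bipartition of its vertex set with cut-rank rk_G(A,B) > k. Then for every k-flip G′ of G there exist a ∈ A and b ∈ B that are adjacent in G′. -/

import Mathlib

/-- A `k`-flip of a graph `G`: there exist a coloring `c : V → Fin k` and a symmetric
relation `F` on `Fin k` such that distinct vertices `u, v` are adjacent in `G'` iff
exactly one of `G.Adj u v` and `F (c u) (c v)` holds. -/
def IsKFlip {V : Type*} (k : ℕ) (G G' : SimpleGraph V) : Prop :=
  ∃ (c : V → Fin k) (F : Fin k → Fin k → Prop), Symmetric F ∧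
    ∀ u v : V, u ≠ v → (G'.Adj u v ↔ Xor' (G.Adj u v) (F (c u) (c v)))

/-- The cut-rank of a pair of vertex sets `A, B` in a graph `G`: the rank over `GF(2)`
of the `A × B` matrix whose `(a, b)` entry is `1` iff `ab` is an edge of `G`. -/
noncomputable def cutRank {V : Type*} (G : SimpleGraph V) [DecidableRel G.Adj]
    (A B : Finset V) : ℕ :=
  (Matrix.of fun (a : A) (b : B) => if G.Adj a.1 b.1 then (1 : ZMod 2) else 0).rank

/-- If `V(G) = A ⊎ B` is a bipartition with cut-rank greater than `k`, then every
`k`-flip of `G` has an edge between `A` and `B`. -/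
theorem stmt7 {V : Type*} [Fintype V] [DecidableEq V]
    (G : SimpleGraph V) [DecidableRel G.Adj] (k : ℕ)
    (A B : Finset V) (hdisj : Disjoint A B) (hcover : A ∪ B = Finset.univ)
    (hrank : k < cutRank G A B)
    (G' : SimpleGraph V) (hflip : IsKFlip k G G') :
    ∃ a ∈ A, ∃ b ∈ B, G'.Adj a b := by
  classical
  by_contra hcon
  push_neg at hcon
  obtain ⟨c, F, hFsymm, hiff⟩ := hflip
  have hne : ∀ (a : A) (b : B), a.1 ≠ b.1 := fun a b h =>
    Finset.disjoint_left.mp hdisj a.2 (h ▸ b.2)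
  have key : ∀ (a : A) (b : B),
      (if G.Adj a.1 b.1 then (1 : ZMod 2) else 0)
        = if F (c a.1) (c b.1) then 1 else 0 := by
    intro a b
    have h1 := hiff a.1 b.1 (hne a b)
    have h2 : ¬ G'.Adj a.1 b.1 := hcon a.1 a.2 b.1 b.2
    have hG : G.Adj a.1 b.1 ↔ F (c a.1) (c b.1) := by
      rw [h1] at h2; unfold Xor' at h2; unfold Xor at h2; tauto
    exact if_congr hG rfl rfl
  have hM : (Matrix.of fun (a : A) (b : B) =>
        if G.Adj a.1 b.1 then (1 : ZMod 2) else 0)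
      = (Matrix.of fun (a : A) (i : Fin k) => if c a.1 = i then (1 : ZMod 2) else 0)
        * (Matrix.of fun (i : Fin k) (b : B) => if F i (c b.1) then (1 : ZMod 2) else 0) := by
    ext a b
    simp only [Matrix.of_apply, Matrix.mul_apply, ite_mul, one_mul, zero_mul, key a b]
    rw [Finset.sum_ite_eq (Finset.univ) (c a.1)]
    simp
  have hle : cutRank G A B ≤ k := by
    unfold cutRank
    rw [hM]
    refine le_trans (Matrix.rank_mul_le_right _ _) ?_
    exact le_trans (Matrix.rank_le_card_height _) (by simp)
  omega
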